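/- Let μ ≥ 1, let L : ℂ^μ → ℂ^μ be a unitary linear map with L L̄ = L̄ L = id (where L̄ = J₀ L J₀ and J₀ is entrywise complex conjugation), and let ℓ : ℂ^μ → ℂ^μ be a linear map with ℓ† = ℓ, ℓ² = id, and L ℓ̄ = ℓ L (equivalently, the antiunitary map A(v) := L(v̄) commutes with ℓ). Then there exists an orthonormal basis {v_p}_{1 ≤ p ≤ μ} of ℂ^μ consisting of eigenvectors of ℓ such that v_p = L(v̄_p) for every p. -/

import Mathlib

/-- Entrywise complex conjugation `J₀` on `ℂ^μ`. -/
noncomputable def conjE {μ : ℕ} (v : EuclideanSpace ℂ (Fin μ)) : EuclideanSpace ℂ (Fin μ) :=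
  WithLp.toLp 2 (fun p => star (v p))

open scoped InnerProductSpace
lemma conjE_smul {μ : ℕ} (c : ℂ) (a : EuclideanSpace ℂ (Fin μ)) :
    conjE (c • a) = star c • conjE a := by
  ext p; simp [conjE]

lemma conjE_conjE {μ : ℕ} (a : EuclideanSpace ℂ (Fin μ)) : conjE (conjE a) = a := by
  ext p; simp [conjE]

lemma inner_conjE {μ : ℕ} (a b : EuclideanSpace ℂ (Fin μ)) :
    ⟪conjE a, conjE b⟫_ℂ = ⟪b, a⟫_ℂ := by
  simp [PiLp.inner_apply, conjE, RCLike.inner_apply, mul_comm]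

lemma aux6 (μ : ℕ)
    (L ℓ : EuclideanSpace ℂ (Fin μ) →ₗ[ℂ] EuclideanSpace ℂ (Fin μ))
    (hU1 : LinearMap.adjoint L ∘ₗ L = LinearMap.id)
    (h1 : ∀ v, L (conjE (L (conjE v))) = v)
    (hℓsa : LinearMap.adjoint ℓ = ℓ)
    (hℓsq : ℓ ∘ₗ ℓ = LinearMap.id)
    (hcomm : ∀ v, L (conjE (ℓ (conjE v))) = ℓ (L v)) :
    ∀ n (V : Submodule ℂ (EuclideanSpace ℂ (Fin μ))), Module.finrank ℂ V = n →
      (∀ v ∈ V, ℓ v ∈ V) → (∀ v ∈ V, L (conjE v) ∈ V) →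
      ∃ f : Fin n → EuclideanSpace ℂ (Fin μ), Orthonormal ℂ f ∧
        ∀ p, f p ∈ V ∧ (ℓ (f p) = f p ∨ ℓ (f p) = -(f p)) ∧ f p = L (conjE (f p)) := by
  -- basic consequences
  have hℓℓ : ∀ v, ℓ (ℓ v) = v := fun v => congrFun (congrArg DFunLike.coe hℓsq) v
  have hLinner : ∀ a b, ⟪L a, L b⟫_ℂ = ⟪a, b⟫_ℂ := by
    intro a b
    rw [← LinearMap.adjoint_inner_right]
    rw [show LinearMap.adjoint L (L b) = b from congrFun (congrArg DFunLike.coe hU1) b]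
  have hℓinner : ∀ a b, ⟪ℓ a, b⟫_ℂ = ⟪a, ℓ b⟫_ℂ := by
    intro a b
    conv_lhs => rw [← hℓsa]
    rw [LinearMap.adjoint_inner_left]
  have hAinner : ∀ a b, ⟪L (conjE a), L (conjE b)⟫_ℂ = ⟪b, a⟫_ℂ := by
    intro a b; rw [hLinner, inner_conjE]
  have hAℓ : ∀ v, L (conjE (ℓ v)) = ℓ (L (conjE v)) := by
    intro v
    have := hcomm (conjE v)
    rwa [conjE_conjE] at this
  have hAadd : ∀ a b, L (conjE (a + b)) = L (conjE a) + L (conjE b) := by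
    intro a b
    have : conjE (a + b) = conjE a + conjE b := by ext p; simp [conjE]
    rw [this, map_add]
  have hAsmul : ∀ (c : ℂ) a, L (conjE (c • a)) = star c • L (conjE a) := by
    intro c a; rw [conjE_smul, map_smul]
  intro n
  induction n with
  | zero =>
    intro V _ _ _
    exact ⟨fun i => i.elim0, ⟨fun i => i.elim0, fun i => i.elim0⟩, fun p => p.elim0⟩
  | succ n IH =>
    intro V hrank hℓV hAV
    -- get a nonzero vector
    obtain ⟨v, hvV, hv0⟩ : ∃ v ∈ V, v ≠ 0 := by
      by_contra h
      push_neg at h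
      have : V = ⊥ := by
        rw [Submodule.eq_bot_iff]; exact h
      rw [this, finrank_bot] at hrank
      omega
    -- get an eigenvector
    obtain ⟨u, huV, hu0, hue⟩ : ∃ u ∈ V, u ≠ 0 ∧ (ℓ u = u ∨ ℓ u = -u) := by
      by_cases h : v + ℓ v = 0
      · refine ⟨v, hvV, hv0, Or.inr ?_⟩
        have : ℓ v = -v := by linear_combination (norm := module) h
        exact this
      · refine ⟨v + ℓ v, V.add_mem hvV (hℓV v hvV), h, Or.inl ?_⟩
        rw [map_add, hℓℓ]; abel
    -- get an A-fixed eigenvector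
    obtain ⟨w, hwV, hw0, hwe, hwA⟩ : ∃ w ∈ V, w ≠ 0 ∧ (ℓ w = w ∨ ℓ w = -w) ∧
        L (conjE w) = w := by
      have hℓAu : ℓ (L (conjE u)) = L (conjE (ℓ u)) := (hAℓ u).symm
      by_cases h : u + L (conjE u) = 0
      · have hAu : L (conjE u) = -u := by linear_combination (norm := module) h
        refine ⟨Complex.I • u, V.smul_mem _ huV, ?_, ?_, ?_⟩
        · exact smul_ne_zero Complex.I_ne_zero hu0
        · rcases hue with h' | h'
          · left; rw [map_smul, h']
          · right; rw [map_smul, h', smul_neg]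
        · rw [hAsmul, hAu]
          simp [smul_smul, Complex.conj_I]
      · refine ⟨u + L (conjE u), V.add_mem huV (hAV u huV), h, ?_, ?_⟩
        · rcases hue with h' | h'
          · left; rw [map_add, h', hℓAu, h']
          · right
            rw [map_add, h', hℓAu, h']
            have : conjE (-u) = -conjE u := by ext p; simp [conjE]
            rw [this, map_neg]; abel
        · rw [hAadd, h1]; abel
    -- normalize
    set c : ℂ := (‖w‖ : ℂ)⁻¹ with hc
    have hwn : ‖w‖ ≠ 0 := norm_ne_zero_iff.mpr hw0
    set x : EuclideanSpace ℂ (Fin μ) := c • w with hx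
    have hxV : x ∈ V := V.smul_mem _ hwV
    have hxnorm : ‖x‖ = 1 := by
      rw [hx, norm_smul, hc]
      simp [norm_inv, hwn]
    have hx0 : x ≠ 0 := by
      intro h; rw [h, norm_zero] at hxnorm; norm_num at hxnorm
    have hxe : ℓ x = x ∨ ℓ x = -x := by
      rcases hwe with h' | h'
      · left; rw [hx, map_smul, h']
      · right; rw [hx, map_smul, h', smul_neg]
    have hxA : L (conjE x) = x := by
      rw [hx, hAsmul, hwA]
      congr 1
      rw [hc]
      simp
    have hxx : ⟪x, x⟫_ℂ = 1 := by
      rw [@inner_self_eq_norm_sq_to_K ℂ, hxnorm]; norm_num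
    -- the orthogonal complement within V
    set W : Submodule ℂ (EuclideanSpace ℂ (Fin μ)) := V ⊓ (ℂ ∙ x)ᗮ with hW
    have hmemW : ∀ y, y ∈ W ↔ y ∈ V ∧ ⟪x, y⟫_ℂ = 0 := by
      intro y
      rw [hW, Submodule.mem_inf, Submodule.mem_orthogonal_singleton_iff_inner_right]
    have hℓW : ∀ y ∈ W, ℓ y ∈ W := by
      intro y hy
      rw [hmemW] at hy ⊢
      refine ⟨hℓV y hy.1, ?_⟩
      rw [← hℓinner]
      rcases hxe with h' | h'
      · rw [h', hy.2]
      · rw [h', inner_neg_left, hy.2, neg_zero]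
    have hAW : ∀ y ∈ W, L (conjE y) ∈ W := by
      intro y hy
      rw [hmemW] at hy ⊢
      refine ⟨hAV y hy.1, ?_⟩
      calc ⟪x, L (conjE y)⟫_ℂ = ⟪L (conjE x), L (conjE y)⟫_ℂ := by rw [hxA]
        _ = ⟪y, x⟫_ℂ := hAinner x y
        _ = 0 := by rw [← inner_conj_symm, hy.2, map_zero]
    -- dimension count
    have hsup : (ℂ ∙ x) ⊔ W = V := by
      apply le_antisymm
      · apply sup_le
        · rw [Submodule.span_le, Set.singleton_subset_iff]; exact hxV
        · exact inf_le_left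
      · intro y hy
        have hdecomp : y = ⟪x, y⟫_ℂ • x + (y - ⟪x, y⟫_ℂ • x) := by abel
        rw [hdecomp]
        apply Submodule.add_mem_sup
        · exact Submodule.smul_mem _ _ (Submodule.mem_span_singleton_self x)
        · rw [hmemW]
          refine ⟨V.sub_mem hy (V.smul_mem _ hxV), ?_⟩
          rw [inner_sub_right, inner_smul_right, hxx, mul_one, sub_self]
    have hinf : (ℂ ∙ x) ⊓ W = ⊥ := by
      rw [Submodule.eq_bot_iff]
      intro y hy
      obtain ⟨hy1, hy2⟩ := Submodule.mem_inf.mp hy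
      obtain ⟨d, rfl⟩ := Submodule.mem_span_singleton.mp hy1
      rw [hmemW] at hy2
      have := hy2.2
      rw [inner_smul_right, hxx, mul_one] at this
      rw [this, zero_smul]
    have hrankW : Module.finrank ℂ W = n := by
      have h1' := Submodule.finrank_sup_add_finrank_inf_eq (ℂ ∙ x) W
      rw [hsup, hinf, hrank, finrank_bot, finrank_span_singleton hx0] at h1'
      omega
    obtain ⟨g, hgON, hgp⟩ := IH W hrankW hℓW hAW
    -- assemble
    have hWx : ∀ i, ⟪x, g i⟫_ℂ = 0 := fun i => ((hmemW (g i)).mp (hgp i).1).2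
    refine ⟨Fin.cons x g, ?_, ?_⟩
    · rw [orthonormal_iff_ite]
      intro i j
      refine Fin.cases ?_ ?_ i <;> [skip; intro i'] <;> refine Fin.cases ?_ ?_ j
      · simp [hxx, hxnorm]
      · intro j'; simp [hWx j', (Fin.succ_ne_zero j').symm]
      · simp [← inner_conj_symm (g i') x, hWx i', Fin.succ_ne_zero i']
      · intro j'
        have := orthonormal_iff_ite.mp hgON i' j'
        simpa [Fin.succ_inj] using this
    · intro p
      refine Fin.cases ?_ ?_ p
      · exact ⟨hxV, hxe, hxA.symm⟩
      · intro p'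
        obtain ⟨hp1, hp2, hp3⟩ := hgp p'
        exact ⟨((hmemW (g p')).mp hp1).1, by simpa using hp2, by simpa using hp3⟩

/-- If `L` is unitary on `ℂ^μ` with `L L̄ = L̄ L = id`, and `ℓ` is a
self-adjoint involution with `L ℓ̄ = ℓ L`, then there is an orthonormal basis of eigenvectors
of `ℓ` (with eigenvalues `±1`) fixed by the antiunitary `v ↦ L(v̄)`. -/
theorem statement6 (μ : ℕ) (hμ : 1 ≤ μ)
    (L ℓ : EuclideanSpace ℂ (Fin μ) →ₗ[ℂ] EuclideanSpace ℂ (Fin μ))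
    (hU1 : LinearMap.adjoint L ∘ₗ L = LinearMap.id)
    (hU2 : L ∘ₗ LinearMap.adjoint L = LinearMap.id)
    (h1 : ∀ v, L (conjE (L (conjE v))) = v)
    (h2 : ∀ v, conjE (L (conjE (L v))) = v)
    (hℓsa : LinearMap.adjoint ℓ = ℓ)
    (hℓsq : ℓ ∘ₗ ℓ = LinearMap.id)
    (hcomm : ∀ v, L (conjE (ℓ (conjE v))) = ℓ (L v)) :
    ∃ b : OrthonormalBasis (Fin μ) ℂ (EuclideanSpace ℂ (Fin μ)),
      ∀ p, (ℓ (b p) = b p ∨ ℓ (b p) = -(b p)) ∧ b p = L (conjE (b p)) := by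
  have hf := aux6 μ L ℓ hU1 h1 hℓsa hℓsq hcomm μ ⊤
    (by simp) (fun v _ => Submodule.mem_top) (fun v _ => Submodule.mem_top)
  obtain ⟨f, hfON, hfp⟩ := hf
  have : Nonempty (Fin μ) := ⟨⟨0, hμ⟩⟩
  have hspan : Submodule.span ℂ (Set.range f) = ⊤ :=
    hfON.linearIndependent.span_eq_top_of_card_eq_finrank (by simp)
  refine ⟨OrthonormalBasis.mk hfON hspan.ge, fun p => ?_⟩
  rw [OrthonormalBasis.coe_mk]
  exact ⟨(hfp p).2.1, (hfp p).2.2⟩
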